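/- Let L be a finite distributive strong upper semilattice and S a distributive lattice with a greatest element ⊤. Let φ : L → S satisfy φ(x ⊔ y) = φ(x) ⊔ φ(y) for all x, y, φ(⊤) = ⊤, and φ(w) = φ(x) ⊓ φ(y) whenever IsGLB {x, y} w in L. Then there exists a unique lattice homomorphism φ̂ : D → S (preserving ⊓ and ⊔) such that φ = φ̂ ∘ ν. -/

import Mathlib

/-- A strong upper semilattice: any two elements with a common lower bound
have a greatest lower bound. -/
def StrongUpper (L : Type*) [SemilatticeSup L] : Prop :=
  ∀ x y : L, (∃ z, z ≤ x ∧ z ≤ y) → ∃ w, IsGLB {x, y} w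

/-- Every interval is a distributive lattice. -/
def IntervalDistrib (L : Type*) [SemilatticeSup L] : Prop :=
  ∀ a x y z w w' : L, a ≤ x → a ≤ y → a ≤ z →
    IsGLB {x, y} w → IsGLB {x ⊔ z, y ⊔ z} w' → w' = w ⊔ z

/-- Meet-irreducible element. -/
def MeetIrred {L : Type*} [SemilatticeSup L] [OrderTop L] (m : L) : Prop :=
  m ≠ ⊤ ∧ ∀ p q : L, IsGLB {p, q} m → m = p ∨ m = q

/-- An order filter on the set of meet-irreducibles of `L`. -/
structure MIOrderFilter (L : Type*) [SemilatticeSup L] [OrderTop L] where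
  carrier : Set L
  mi : ∀ m ∈ carrier, MeetIrred m
  upward : ∀ m ∈ carrier, ∀ m', MeetIrred m' → m ≤ m' → m' ∈ carrier

/-- Union of order filters (the meet of `D`). -/
def MIOrderFilter.union {L : Type*} [SemilatticeSup L] [OrderTop L]
    (F G : MIOrderFilter L) : MIOrderFilter L where
  carrier := F.carrier ∪ G.carrier
  mi := by rintro m (h | h); exacts [F.mi m h, G.mi m h]
  upward := by
    rintro m (h | h) m' h1 h2
    · exact Or.inl (F.upward m h m' h1 h2)
    · exact Or.inr (G.upward m h m' h1 h2)

/-- Intersection of order filters (the join of `D`). -/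
def MIOrderFilter.inter {L : Type*} [SemilatticeSup L] [OrderTop L]
    (F G : MIOrderFilter L) : MIOrderFilter L where
  carrier := F.carrier ∩ G.carrier
  mi := fun m hm => F.mi m hm.1
  upward := fun m hm m' h1 h2 => ⟨F.upward m hm.1 m' h1 h2, G.upward m hm.2 m' h1 h2⟩

/-- The embedding `ν : L → D`, `ν x = {m ∈ M | x ≤ m}`. -/
def nu {L : Type*} [SemilatticeSup L] [OrderTop L] (x : L) : MIOrderFilter L where
  carrier := {m : L | MeetIrred m ∧ x ≤ m}
  mi := fun m hm => hm.1
  upward := fun m hm m' h1 h2 => ⟨h1, hm.2.trans h2⟩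

theorem universal_property_of_D {L S : Type*} [SemilatticeSup L] [OrderTop L] [Finite L]
    [DistribLattice S] [OrderTop S]
    (hS : StrongUpper L) (hD : IntervalDistrib L)
    (φ : L → S)
    (hsup : ∀ x y : L, φ (x ⊔ y) = φ x ⊔ φ y)
    (htop : φ ⊤ = ⊤)
    (hmeet : ∀ x y w : L, IsGLB {x, y} w → φ w = φ x ⊓ φ y) :
    ∃! φh : MIOrderFilter L → S,
      (∀ F G : MIOrderFilter L, φh (F.union G) = φh F ⊓ φh G) ∧
      (∀ F G : MIOrderFilter L, φh (F.inter G) = φh F ⊔ φh G) ∧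
      (∀ x : L, φ x = φh (nu x)) := by
  classical
  -- φ is monotone
  have mono : ∀ {x y : L}, x ≤ y → φ x ≤ φ y := by
    intro x y h
    have h2 := hsup x y
    rw [sup_eq_right.mpr h] at h2
    rw [h2]; exact le_sup_left
  -- finset of a filter
  set ff : MIOrderFilter L → Finset L := fun F => (Set.toFinite F.carrier).toFinset with hff
  have memff : ∀ (F : MIOrderFilter L) (m : L), m ∈ ff F ↔ m ∈ F.carrier :=
    fun F m => Set.Finite.mem_toFinset _
  -- extensionality for filters
  have extF : ∀ F G : MIOrderFilter L, F.carrier = G.carrier → F = G := by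
    rintro ⟨c, _, _⟩ ⟨c', _, _⟩ h
    simp only at h; subst h; rfl
  -- key lemma: φ x = inf over ν x
  have key : ∀ x : L, φ x = (ff (nu x)).inf φ := by
    have wf := (Finite.to_wellFoundedGT (α := L)).wf
    intro x
    refine wf.induction (C := fun x => φ x = (ff (nu x)).inf φ) x ?_
    intro x IH
    by_cases hx : x = ⊤
    · subst hx
      have : ff (nu ⊤) = ∅ := by
        apply Finset.eq_empty_of_forall_notMem
        intro m hm
        rw [memff] at hm
        exact hm.1.1 (top_le_iff.mp hm.2)
      rw [this, Finset.inf_empty, htop]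
    by_cases hmi : MeetIrred x
    · apply le_antisymm
      · exact Finset.le_inf fun m hm => mono ((memff _ _).mp hm).2
      · exact Finset.inf_le ((memff _ _).mpr ⟨hmi, le_refl x⟩)
    · simp only [MeetIrred, not_and, not_forall, not_or] at hmi
      obtain ⟨p, q, hglb, hnp, hnq⟩ := hmi hx
      have hxp : x ≤ p := hglb.1 (by simp)
      have hxq : x ≤ q := hglb.1 (by simp)
      have hcar : (nu x).carrier = (nu p).carrier ∪ (nu q).carrier := by
        ext m
        constructor
        · rintro ⟨hmMI, hxm⟩
          obtain ⟨w', hw'⟩ := hS (p ⊔ m) (q ⊔ m) ⟨m, le_sup_right, le_sup_right⟩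
          have hweq := hD x p q m x w' hxp hxq hxm hglb hw'
          rw [sup_eq_right.mpr hxm] at hweq
          rw [hweq] at hw'
          rcases hmMI.2 _ _ hw' with h | h
          · exact Or.inl ⟨hmMI, le_sup_left.trans h.ge⟩
          · exact Or.inr ⟨hmMI, le_sup_left.trans h.ge⟩
        · rintro (⟨hmMI, hpm⟩ | ⟨hmMI, hqm⟩)
          exacts [⟨hmMI, hxp.trans hpm⟩, ⟨hmMI, hxq.trans hqm⟩]
      have hfin : ff (nu x) = ff (nu p) ∪ ff (nu q) := by
        ext m
        simp only [memff, hcar, Set.mem_union, Finset.mem_union]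
      rw [hfin, Finset.inf_union,
        ← IH p (lt_of_le_of_ne hxp hnp),
        ← IH q (lt_of_le_of_ne hxq hnq)]
      exact hmeet p q x hglb
  refine ⟨fun F => (ff F).inf φ, ⟨?_, ?_, fun x => key x⟩, ?_⟩
  · -- union
    intro F G
    show (ff (F.union G)).inf φ = (ff F).inf φ ⊓ (ff G).inf φ
    have : ff (F.union G) = ff F ∪ ff G := by
      ext m
      simp only [memff, Finset.mem_union, MIOrderFilter.union, Set.mem_union]
    rw [this, Finset.inf_union]
  · -- inter
    intro F G
    show (ff (F.inter G)).inf φ = (ff F).inf φ ⊔ (ff G).inf φ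
    apply le_antisymm
    · -- inf over F∩G ≤ inf F ⊔ inf G
      rw [Finset.inf_sup_distrib_right]
      refine Finset.le_inf fun m hm => ?_
      rw [Finset.inf_sup_distrib_left]
      refine Finset.le_inf fun n hn => ?_
      have h1 : (φ m ⊔ φ n) = φ (m ⊔ n) := (hsup m n).symm
      rw [h1, key (m ⊔ n)]
      apply Finset.inf_mono
      intro k hk
      rw [memff] at hk ⊢
      obtain ⟨hkMI, hmn⟩ := hk
      exact ⟨F.upward m ((memff F m).mp hm) k hkMI (le_sup_left.trans hmn),
        G.upward n ((memff G n).mp hn) k hkMI (le_sup_right.trans hmn)⟩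
    · refine sup_le (Finset.le_inf fun k hk => ?_) (Finset.le_inf fun k hk => ?_)
      · exact Finset.inf_le ((memff F k).mpr (((memff _ k).mp hk).1)
          )
      · exact Finset.inf_le ((memff G k).mpr (((memff _ k).mp hk).2))
  · -- uniqueness
    rintro ψ ⟨h1, _h2, h3⟩
    have uniq : ∀ n : ℕ, ∀ F : MIOrderFilter L, (ff F).card = n → ψ F = (ff F).inf φ := by
      intro n
      induction n using Nat.strong_induction_on with
      | _ n IH =>
        intro F hcard
        rcases Finset.eq_empty_or_nonempty (ff F) with hE | hne
        · have hFtop : F = nu ⊤ := by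
            apply extF
            have h0 : F.carrier = ∅ := by
              ext m; simp only [Set.mem_empty_iff_false, iff_false]
              intro hm; exact Finset.eq_empty_iff_forall_notMem.mp hE m ((memff F m).mpr hm)
            rw [h0]
            ext m
            simp only [Set.mem_empty_iff_false, false_iff, nu, Set.mem_setOf_eq]
            rintro ⟨hmMI, hm⟩
            exact hmMI.1 (top_le_iff.mp hm)
          rw [hE, Finset.inf_empty, hFtop, ← h3 ⊤, htop]
        · obtain ⟨m, hmF, hmin⟩ : ∃ m ∈ ff F, ∀ x ∈ ff F, ¬x < m := by
            obtain ⟨m, hm⟩ := Finset.exists_minimal hne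
            exact ⟨m, hm.1, fun x hx hlt => hm.not_lt hx hlt⟩
          have hmF' : m ∈ F.carrier := (memff F m).mp hmF
          have hmMI : MeetIrred m := F.mi m hmF'
          -- F' = F minus m
          set F' : MIOrderFilter L :=
            { carrier := F.carrier \ {m}
              mi := fun k hk => F.mi k hk.1
              upward := by
                rintro k ⟨hkF, hkm⟩ k' hk' hle
                refine ⟨F.upward k hkF k' hk' hle, ?_⟩
                intro hk'm
                simp only [Set.mem_singleton_iff] at hk'm hkm
                subst hk'm
                rcases eq_or_lt_of_le hle with h | h
                · exact hkm h
                · exact hmin k ((memff F k).mpr hkF) h } with hF'def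
          have hFeq : F = F'.union (nu m) := by
            apply extF
            show F.carrier = F'.carrier ∪ (nu m).carrier
            ext k
            constructor
            · intro hk
              by_cases hkm : k = m
              · subst hkm; exact Or.inr ⟨F.mi k hk, le_refl k⟩
              · exact Or.inl ⟨hk, hkm⟩
            · rintro (⟨hk, _⟩ | ⟨hkMI, hmk⟩)
              · exact hk
              · exact F.upward m hmF' k hkMI hmk
          have hffF : ff F = insert m (ff F') := by
            ext k
            simp only [memff, Finset.mem_insert, hF'def, Set.mem_diff,
              Set.mem_singleton_iff]
            constructor
            · intro hk
              by_cases hkm : k = m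
              · exact Or.inl hkm
              · exact Or.inr ⟨hk, hkm⟩
            · rintro (rfl | ⟨hk, _⟩)
              · exact hmF'
              · exact hk
          have hcard' : (ff F').card < n := by
            have hmnot : m ∉ ff F' := by
              rw [memff]
              rintro ⟨_, hm⟩
              exact hm rfl
            have := Finset.card_insert_of_notMem hmnot
            rw [← hffF, hcard] at this
            omega
          have hIH := IH _ hcard' F' rfl
          have hL : ψ F = (ff F').inf φ ⊓ φ m := by
            rw [hFeq, h1, hIH, ← h3 m]
          have hR : (ff F).inf φ = (ff F').inf φ ⊓ φ m := by
            rw [hffF, Finset.inf_insert, inf_comm]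
          rw [hL, hR]
      
    funext F
    exact uniq (ff F).card F rfl
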